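/- Let μ > 0 and ν ≥ 1 be real numbers and set B := (μ^⌊μ⌋ / ⌊μ⌋!)^(ν−1). Then the COM-Poisson normalising constant satisfies 𝒵(μ, ν) = ∑_{y=0}^∞ (μ^y/y!)^ν ≤ B · e^μ. -/

import Mathlib

/-- For `μ > 0`, `ν ≥ 1` and `B := (μ^⌊μ⌋ / ⌊μ⌋!)^(ν−1)`, the COM-Poisson
normalising constant satisfies `∑_{y=0}^∞ (μ^y/y!)^ν ≤ B · e^μ`. -/
theorem stmt_9 (μ ν : ℝ) (hμ : 0 < μ) (hν : 1 ≤ ν)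
    (B : ℝ) (hB : B = (μ ^ ⌊μ⌋₊ / (Nat.factorial ⌊μ⌋₊ : ℝ)) ^ (ν - 1)) :
    ∑' y : ℕ, (μ ^ y / (Nat.factorial y : ℝ)) ^ ν ≤ B * Real.exp μ := by
  set n := ⌊μ⌋₊ with hn
  set f : ℕ → ℝ := fun y => μ ^ y / (Nat.factorial y : ℝ) with hf
  have fpos : ∀ y, 0 < f y := fun y =>
    div_pos (pow_pos hμ y) (by exact_mod_cast Nat.factorial_pos y)
  have fsucc : ∀ y, f (y + 1) = f y * (μ / (y + 1)) := by
    intro y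
    simp only [hf, Nat.factorial_succ, pow_succ, Nat.cast_mul, Nat.cast_add, Nat.cast_one]
    field_simp
  -- f y ≤ f n for all y
  have step_up : ∀ y, y + 1 ≤ n → f y ≤ f (y + 1) := by
    intro y hy
    rw [fsucc]
    have h1 : (1 : ℝ) ≤ μ / (y + 1) := by
      rw [le_div_iff₀ (by positivity), one_mul]
      have : ((y : ℝ) + 1) ≤ n := by exact_mod_cast hy
      exact this.trans (Nat.floor_le hμ.le)
    nlinarith [fpos y]
  have step_down : ∀ y, n ≤ y → f (y + 1) ≤ f y := by
    intro y hy
    rw [fsucc]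
    have h1 : μ / (y + 1) ≤ 1 := by
      rw [div_le_one (by positivity)]
      have h2 : μ < n + 1 := Nat.lt_floor_add_one μ
      have : (n : ℝ) ≤ y := by exact_mod_cast hy
      linarith
    nlinarith [fpos y]
  have key1 : ∀ d y, y + d = n → f y ≤ f n := by
    intro d
    induction d with
    | zero => intro y h; simp only [Nat.add_zero] at h; rw [h]
    | succ d ih =>
      intro y h
      exact (step_up y (by omega)).trans (ih (y + 1) (by omega))
  have key2 : ∀ d, f (n + d) ≤ f n := by
    intro d
    induction d with
    | zero => simp
    | succ d ih => exact (step_down (n + d) (Nat.le_add_right n d)).trans ih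
  have fmax : ∀ y, f y ≤ f n := by
    intro y
    rcases le_or_gt y n with h | h
    · exact key1 (n - y) y (by omega)
    · have := key2 (y - n)
      rwa [Nat.add_sub_cancel' h.le] at this
  -- pointwise bound
  have hpt : ∀ y, (f y) ^ ν ≤ B * f y := by
    intro y
    have h1 : (f y) ^ ν = (f y) ^ (ν - 1) * f y := by
      rw [← Real.rpow_add_one (fpos y).ne' (ν - 1), sub_add_cancel]
    rw [h1, hB]
    exact mul_le_mul_of_nonneg_right
      (Real.rpow_le_rpow (fpos y).le (fmax y) (by linarith)) (fpos y).le
  -- summability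
  have hsum : Summable f := Real.summable_pow_div_factorial μ
  have hsumB : Summable (fun y => B * f y) := hsum.mul_left B
  have hsumν : Summable (fun y => (f y) ^ ν) :=
    Summable.of_nonneg_of_le (fun y => Real.rpow_nonneg (fpos y).le ν) hpt hsumB
  calc ∑' y, (f y) ^ ν ≤ ∑' y, B * f y := Summable.tsum_le_tsum hpt hsumν hsumB
    _ = B * ∑' y, f y := tsum_mul_left
    _ = B * Real.exp μ := by
        rw [Real.exp_eq_exp_ℝ, NormedSpace.exp_eq_tsum_div]
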